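/- For any lists p and y* over a type α with decidable equality, if k is an index with 0 ≤ k ≤ |y*| such that D(p, y*_{<k}) = min over 0 ≤ j ≤ |y*| of D(p, y*_{<j}) = m, then completing p with the suffix y*_{≥k} achieves exactly this bound: D(p ++ y*_{≥k}, y*) = m. -/

import Mathlib

/-- Costs for the edit operations (as in the former `Mathlib.Data.List.EditDistance.Defs`). -/
structure Levenshtein.Cost (α β δ : Type*) where
  delete : α → δ
  insert : β → δ
  substitute : α → β → δ

/-- The default unit cost function (as in the former Mathlib). -/
def Levenshtein.defaultCost {α : Type*} [DecidableEq α] : Levenshtein.Cost α α ℕ where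
  delete _ := 1
  insert _ := 1
  substitute a b := if a = b then 0 else 1

/-- One row step of the dynamic program (as in the former Mathlib). -/
def Levenshtein.impl {α β δ : Type*} [AddZeroClass δ] [Min δ] (C : Levenshtein.Cost α β δ)
    (xs : List α) (y : β) (d : {r : List δ // 0 < r.length}) : {r : List δ // 0 < r.length} :=
  let ⟨ds, w⟩ := d
  xs.zip (ds.zip ds.tail) |>.foldr
    (init := ⟨[C.insert y + ds.getLast (List.ne_nil_of_length_pos w)], by simp⟩)
    (fun ⟨x, d₀, d₁⟩ ⟨r, w⟩ =>
      ⟨min (C.delete x + r[0]) (min (C.insert y + d₀) (C.substitute x y + d₁)) :: r, by simp⟩)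

/-- Edit distances between all suffixes (as in the former Mathlib). -/
def suffixLevenshtein {α β δ : Type*} [AddZeroClass δ] [Min δ] (C : Levenshtein.Cost α β δ)
    (xs : List α) (ys : List β) : {r : List δ // 0 < r.length} :=
  ys.foldr
    (Levenshtein.impl C xs)
    (xs.foldr (init := ⟨[0], by simp⟩) (fun a ⟨ds, w⟩ => ⟨(C.delete a + ds[0]) :: ds, by simp⟩))

/-- Levenshtein distance with cost function `C` (as in the former Mathlib). -/
def levenshtein {α β δ : Type*} [AddZeroClass δ] [Min δ] (C : Levenshtein.Cost α β δ)
    (xs : List α) (ys : List β) : δ :=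
  let ⟨r, w⟩ := suffixLevenshtein C xs ys
  r[0]

section LevAux

variable {α β δ : Type*} [AddZeroClass δ] [Min δ] (C : Levenshtein.Cost α β δ)

theorem Levenshtein.impl_cons {x : α} {xs : List α} {y : β} {d : δ} {ds : List δ} (w)
    (w' : 0 < List.length ds) :
    Levenshtein.impl C (x :: xs) y ⟨d :: ds, w⟩ =
      let ⟨r, w⟩ := Levenshtein.impl C xs y ⟨ds, w'⟩
      ⟨min (C.delete x + r[0]) (min (C.insert y + d) (C.substitute x y + ds[0])) :: r, by simp⟩ :=
  match ds, w' with | _ :: _, _ => rfl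

theorem Levenshtein.impl_cons_fst_zero {x : α} {xs : List α} {y : β} {d : δ} {ds : List δ}
    (w) (h) (w' : 0 < List.length ds) :
    (Levenshtein.impl C (x :: xs) y ⟨d :: ds, w⟩).1[0]'h =
      let ⟨r, w⟩ := Levenshtein.impl C xs y ⟨ds, w'⟩
      min (C.delete x + r[0]) (min (C.insert y + d) (C.substitute x y + ds[0])) :=
  match ds, w' with | _ :: _, _ => rfl

theorem Levenshtein.impl_length {xs : List α} {y : β} (d : {r : List δ // 0 < r.length})
    (w : d.1.length = xs.length + 1) :
    (Levenshtein.impl C xs y d).1.length = xs.length + 1 := by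
  induction xs generalizing d with
  | nil => rfl
  | cons x xs ih =>
    dsimp [Levenshtein.impl]
    match d, w with
    | ⟨d₁ :: d₂ :: ds, _⟩, w =>
      dsimp
      congr 1
      exact ih ⟨d₂ :: ds, (by simp)⟩ (by simpa using w)

theorem suffixLevenshtein_length (xs : List α) (ys : List β) :
    (suffixLevenshtein C xs ys).1.length = xs.length + 1 := by
  induction ys with
  | nil =>
    dsimp [suffixLevenshtein]
    induction xs with
    | nil => rfl
    | cons _ xs ih =>
      simp_all
  | cons y ys ih =>
    dsimp [suffixLevenshtein]
    rw [Levenshtein.impl_length]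
    exact ih

theorem suffixLevenshtein_cons₂ (xs : List α) (y ys) :
    suffixLevenshtein C xs (y :: ys) = (Levenshtein.impl C xs) y (suffixLevenshtein C xs ys) :=
  rfl

theorem suffixLevenshtein_cons₁_aux {α} {x y : { r : List α // 0 < r.length }}
    (w₀ : x.1[0]'x.2 = y.1[0]'y.2) (w : x.1.tail = y.1.tail) : x = y := by
  match x, y with
  | ⟨hx :: tx, _⟩, ⟨hy :: ty, _⟩ => simp_all

theorem suffixLevenshtein_cons₁ (x : α) (xs ys) :
    suffixLevenshtein C (x :: xs) ys =
      ⟨levenshtein C (x :: xs) ys ::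
        (suffixLevenshtein C xs ys).1, by simp⟩ := by
  induction ys with
  | nil =>
    dsimp [levenshtein, suffixLevenshtein]
    rfl
  | cons y ys ih =>
    apply suffixLevenshtein_cons₁_aux
    · rfl
    · rw [suffixLevenshtein_cons₂ C (x :: xs), ih, Levenshtein.impl_cons]
      · rfl
      · simp [suffixLevenshtein_length]

theorem suffixLevenshtein_cons_cons_fst_get_zero (x : α) (xs y ys) (w) :
    (suffixLevenshtein C (x :: xs) (y :: ys)).1[0]'w =
      let ⟨dx, _⟩ := suffixLevenshtein C xs (y :: ys)
      let ⟨dy, _⟩ := suffixLevenshtein C (x :: xs) ys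
      let ⟨dxy, _⟩ := suffixLevenshtein C xs ys
      min
        (C.delete x + dx[0])
        (min
          (C.insert y + dy[0])
          (C.substitute x y + dxy[0])) := by
  conv =>
    lhs
    dsimp only [suffixLevenshtein_cons₂]
  simp only [suffixLevenshtein_cons₁]
  rw [Levenshtein.impl_cons_fst_zero]
  rfl

@[simp]
theorem levenshtein_nil_nil : levenshtein C [] [] = 0 := by
  simp [levenshtein, suffixLevenshtein]

@[simp]
theorem levenshtein_nil_cons (y) (ys) :
    levenshtein C [] (y :: ys) = C.insert y + levenshtein C [] ys := by
  have hl := suffixLevenshtein_length C [] ys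
  unfold levenshtein
  rw [suffixLevenshtein_cons₂]
  generalize suffixLevenshtein C [] ys = d at hl ⊢
  obtain ⟨ds, w⟩ := d
  match ds, w, hl with
  | [a], _, _ => rfl

@[simp]
theorem levenshtein_cons_nil (x : α) (xs : List α) :
    levenshtein C (x :: xs) [] = C.delete x + levenshtein C xs [] :=
  rfl

@[simp]
theorem levenshtein_cons_cons (x : α) (xs : List α) (y : β) (ys : List β) :
    levenshtein C (x :: xs) (y :: ys) =
      min (C.delete x + levenshtein C xs (y :: ys))
        (min (C.insert y + levenshtein C (x :: xs) ys)
          (C.substitute x y + levenshtein C xs ys)) :=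
  suffixLevenshtein_cons_cons_fst_get_zero ..

end LevAux

/-- Unit-cost Levenshtein edit distance between two lists. -/
def editDist {α : Type*} [DecidableEq α] (u v : List α) : ℕ :=
  levenshtein Levenshtein.defaultCost u v

/-- `rowMin p y = min over 0 ≤ j ≤ |y|` of the edit distance between `p` and `y.take j`. -/
def rowMin {α : Type*} [DecidableEq α] (p y : List α) : ℕ :=
  (Finset.range (y.length + 1)).inf' (by simp) (fun j => editDist p (y.take j))

namespace EditAux

variable {α : Type*} [DecidableEq α]

lemma ed_le_insert (u : List α) (b : α) (v : List α) :
    editDist u (b :: v) ≤ 1 + editDist u v := by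
  cases u with
  | nil => simp [editDist, levenshtein_nil_cons, Levenshtein.defaultCost]
  | cons x u =>
    rw [editDist, levenshtein_cons_cons]
    exact le_trans (min_le_right _ _) (min_le_left _ _)

lemma ed_le_delete (x : α) (u v : List α) :
    editDist (x :: u) v ≤ 1 + editDist u v := by
  cases v with
  | nil => simp [editDist, levenshtein_cons_nil, Levenshtein.defaultCost]
  | cons b v =>
    rw [editDist, levenshtein_cons_cons]
    exact min_le_left _ _

lemma ed_le_sub (x : α) (u : List α) (b : α) (v : List α) :
    editDist (x :: u) (b :: v) ≤
      Levenshtein.defaultCost.substitute x b + editDist u v := by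
  rw [editDist, levenshtein_cons_cons]
  exact le_trans (min_le_right _ _) (min_le_right _ _)

lemma ed_self (w : List α) : editDist w w = 0 := by
  induction w with
  | nil => simp [editDist]
  | cons x w ih =>
    have := ed_le_sub x w x w
    simp [Levenshtein.defaultCost, ih] at this
    omega

lemma upper : ∀ (xs ys zs : List α),
    editDist (xs ++ zs) (ys ++ zs) ≤ editDist xs ys := by
  intro xs
  induction xs with
  | nil =>
    intro ys
    induction ys with
    | nil => intro zs; simpa [ed_self] using (ed_self zs).le
    | cons y ys ih =>
      intro zs
      calc editDist ([] ++ zs) ((y :: ys) ++ zs)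
          ≤ 1 + editDist ([] ++ zs) (ys ++ zs) := ed_le_insert _ _ _
        _ ≤ 1 + editDist [] ys := by exact Nat.add_le_add_left (ih zs) 1
        _ = editDist [] (y :: ys) := by
            simp [editDist, levenshtein_nil_cons, Levenshtein.defaultCost]
  | cons x xs ihx =>
    intro ys
    induction ys with
    | nil =>
      intro zs
      calc editDist ((x :: xs) ++ zs) ([] ++ zs)
          ≤ 1 + editDist (xs ++ zs) ([] ++ zs) := ed_le_delete _ _ _
        _ ≤ 1 + editDist xs [] := by exact Nat.add_le_add_left (ihx [] zs) 1
        _ = editDist (x :: xs) [] := by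
            simp [editDist, levenshtein_cons_nil, Levenshtein.defaultCost]
    | cons y ys ihy =>
      intro zs
      have h1 : editDist ((x :: xs) ++ zs) ((y :: ys) ++ zs)
          ≤ 1 + editDist xs (y :: ys) :=
        le_trans (ed_le_delete _ _ _) (Nat.add_le_add_left (ihx (y :: ys) zs) 1)
      have h2 : editDist ((x :: xs) ++ zs) ((y :: ys) ++ zs)
          ≤ 1 + editDist (x :: xs) ys :=
        le_trans (ed_le_insert _ _ _) (Nat.add_le_add_left (ihy zs) 1)
      have h3 : editDist ((x :: xs) ++ zs) ((y :: ys) ++ zs)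
          ≤ Levenshtein.defaultCost.substitute x y + editDist xs ys := by
        calc editDist ((x :: xs) ++ zs) ((y :: ys) ++ zs)
            ≤ Levenshtein.defaultCost.substitute x y
                + editDist (xs ++ zs) (ys ++ zs) := ed_le_sub _ _ _ _
          _ ≤ _ := Nat.add_le_add_left (ihx ys zs) _
      rw [show editDist (x :: xs) (y :: ys) =
        min (1 + editDist xs (y :: ys))
          (min (1 + editDist (x :: xs) ys)
            (Levenshtein.defaultCost.substitute x y + editDist xs ys)) from by
          rw [editDist, levenshtein_cons_cons]; rfl]
      exact le_min h1 (le_min h2 h3)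

lemma lower : ∀ (u s y : List α),
    ∃ j ≤ y.length, editDist u (y.take j) ≤ editDist (u ++ s) y := by
  intro u
  induction u with
  | nil =>
    intro s y
    exact ⟨0, Nat.zero_le _, by simp [editDist]⟩
  | cons x u ihu =>
    intro s y
    induction y with
    | nil =>
      refine ⟨0, le_refl _, ?_⟩
      have hlen : ∀ w : List α, editDist w [] = w.length := by
        intro w
        induction w with
        | nil => simp [editDist]
        | cons a w ih =>
          rw [editDist, levenshtein_cons_nil]
          simp [Levenshtein.defaultCost, editDist] at ih ⊢
          omega
      simp [hlen]
    | cons b y ihy =>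
      have hsplit : editDist ((x :: u) ++ s) (b :: y) =
          min (1 + editDist (u ++ s) (b :: y))
            (min (1 + editDist ((x :: u) ++ s) y)
              (Levenshtein.defaultCost.substitute x b + editDist (u ++ s) y)) := by
        rw [editDist, List.cons_append, levenshtein_cons_cons]; rfl
      rcases min_cases (1 + editDist (u ++ s) (b :: y))
          (min (1 + editDist ((x :: u) ++ s) y)
            (Levenshtein.defaultCost.substitute x b + editDist (u ++ s) y)) with
        ⟨he, _⟩ | ⟨he, _⟩
      · -- delete branch
        obtain ⟨j, hj, hle⟩ := ihu s (b :: y)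
        refine ⟨j, hj, ?_⟩
        calc editDist (x :: u) ((b :: y).take j)
            ≤ 1 + editDist u ((b :: y).take j) := ed_le_delete _ _ _
          _ ≤ 1 + editDist (u ++ s) (b :: y) := Nat.add_le_add_left hle 1
          _ = editDist ((x :: u) ++ s) (b :: y) := by rw [hsplit, he]
      · rcases min_cases (1 + editDist ((x :: u) ++ s) y)
            (Levenshtein.defaultCost.substitute x b + editDist (u ++ s) y) with
          ⟨he2, _⟩ | ⟨he2, _⟩
        · -- insert branch
          obtain ⟨j, hj, hle⟩ := ihy
          refine ⟨j + 1, by simpa using Nat.succ_le_succ hj, ?_⟩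
          calc editDist (x :: u) ((b :: y).take (j + 1))
              = editDist (x :: u) (b :: y.take j) := by rw [List.take_succ_cons]
            _ ≤ 1 + editDist (x :: u) (y.take j) := ed_le_insert _ _ _
            _ ≤ 1 + editDist ((x :: u) ++ s) y := Nat.add_le_add_left hle 1
            _ = editDist ((x :: u) ++ s) (b :: y) := by rw [hsplit, he, he2]
        · -- substitute branch
          obtain ⟨j, hj, hle⟩ := ihu s y
          refine ⟨j + 1, by simpa using Nat.succ_le_succ hj, ?_⟩
          calc editDist (x :: u) ((b :: y).take (j + 1))
              = editDist (x :: u) (b :: y.take j) := by rw [List.take_succ_cons]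
            _ ≤ Levenshtein.defaultCost.substitute x b + editDist u (y.take j) :=
                ed_le_sub _ _ _ _
            _ ≤ Levenshtein.defaultCost.substitute x b + editDist (u ++ s) y :=
                Nat.add_le_add_left hle _
            _ = editDist ((x :: u) ++ s) (b :: y) := by rw [hsplit, he, he2]

end EditAux

theorem suffix_completion_achieves_rowMin {α : Type*} [DecidableEq α]
    (p ystar : List α) (k : ℕ) (hk : k ≤ ystar.length)
    (h : editDist p (ystar.take k) = rowMin p ystar) :
    editDist (p ++ ystar.drop k) ystar = rowMin p ystar := by
  have hub : editDist (p ++ ystar.drop k) ystar ≤ rowMin p ystar := by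
    calc editDist (p ++ ystar.drop k) ystar
        = editDist (p ++ ystar.drop k) (ystar.take k ++ ystar.drop k) := by
          rw [List.take_append_drop]
      _ ≤ editDist p (ystar.take k) := EditAux.upper _ _ _
      _ = rowMin p ystar := h
  have hlb : rowMin p ystar ≤ editDist (p ++ ystar.drop k) ystar := by
    obtain ⟨j, hj, hle⟩ := EditAux.lower p (ystar.drop k) ystar
    calc rowMin p ystar ≤ editDist p (ystar.take j) :=
          Finset.inf'_le _ (Finset.mem_range.mpr (Nat.lt_succ_of_le hj))
      _ ≤ _ := hle
  omega
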